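/- Let p* be a probability density with m ≤ p* ≤ M (0 < m ≤ M), and let {P_θ}_{θ∈Θ} be an identifiable, convex family of probability measures with densities p_θ ≤ M, compact for the Jensen-Shannon metric δ(P,Q) = √(D_JS(P‖Q)). Then there exists a unique θ* ∈ Θ minimizing θ ↦ D_JS(p*‖p_θ) over Θ. -/

import Mathlib

open MeasureTheory Real

/-- Jensen-Shannon divergence between densities `p` and `q` with respect to `μ`. -/
noncomputable def JSdiv {E : Type*} [MeasurableSpace E] (μ : Measure E) (p q : E → ℝ) : ℝ :=
  (1 / 2) * ∫ x, p x * Real.log (2 * p x / (p x + q x)) ∂μ +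
  (1 / 2) * ∫ x, q x * Real.log (2 * q x / (p x + q x)) ∂μ

noncomputable def Fjs (pr q : ℝ) : ℝ :=
  pr * Real.log (2 * pr / (pr + q)) + q * Real.log (2 * q / (pr + q))

noncomputable def Gjs (pr q : ℝ) : ℝ :=
  pr * Real.log (2 * pr) - pr * Real.log (pr + q) + q * Real.log q + Real.log 2 * q
    - q * Real.log (pr + q)

lemma Fjs_eq_Gjs {pr q : ℝ} (hpr : 0 < pr) (hq : 0 ≤ q) : Fjs pr q = Gjs pr q := by
  have hpq : 0 < pr + q := by linarith
  unfold Fjs Gjs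
  rcases hq.eq_or_lt with h | h
  · subst h
    simp only [mul_zero, zero_mul, add_zero, zero_add, Real.log_zero, sub_zero]
    rw [Real.log_div (by positivity) hpr.ne']
    ring
  · rw [Real.log_div (by positivity) hpq.ne', Real.log_div (by positivity) hpq.ne',
      Real.log_mul (by norm_num) hpr.ne', Real.log_mul (by norm_num) h.ne']
    ring

lemma Gjs_hasDerivAt {pr x : ℝ} (hpr : 0 < pr) (hx : 0 < x) :
    HasDerivAt (Gjs pr) (Real.log x + Real.log 2 - Real.log (pr + x)) x := by
  have hpx : 0 < pr + x := by linarith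
  have hlog : HasDerivAt (fun q : ℝ => Real.log (pr + q)) (1 / (pr + x)) x := by
    simpa using ((hasDerivAt_id x).const_add pr).log hpx.ne'
  have h1 : HasDerivAt (fun q : ℝ => pr * Real.log (pr + q)) (pr * (1 / (pr + x))) x :=
    hlog.const_mul pr
  have h2 : HasDerivAt (fun q : ℝ => q * Real.log q) (Real.log x + 1) x :=
    Real.hasDerivAt_mul_log hx.ne'
  have h3 : HasDerivAt (fun q : ℝ => Real.log 2 * q) (Real.log 2) x := by
    simpa using (hasDerivAt_id x).const_mul (Real.log 2)
  have h4 : HasDerivAt (fun q : ℝ => q * Real.log (pr + q))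
      (1 * Real.log (pr + x) + x * (1 / (pr + x))) x :=
    (hasDerivAt_id x).mul hlog
  have := ((((hasDerivAt_const x (pr * Real.log (2 * pr))).sub h1).add h2).add h3).sub h4
  refine this.congr_deriv ?_
  have hsum : pr * (1 / (pr + x)) + x * (1 / (pr + x)) = 1 := by
    rw [← add_mul, mul_one_div, div_self hpx.ne']
  linarith

lemma Gjs_strictConvexOn {pr : ℝ} (hpr : 0 < pr) :
    StrictConvexOn ℝ (Set.Ici (0:ℝ)) (Gjs pr) := by
  apply StrictMonoOn.strictConvexOn_of_deriv (convex_Ici 0)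
  · unfold Gjs
    have hlog : ContinuousOn (fun q : ℝ => Real.log (pr + q)) (Set.Ici 0) := by
      apply ContinuousOn.log (by fun_prop)
      intro x hx
      have : (0:ℝ) ≤ x := hx
      positivity
    exact ((((continuousOn_const.sub (continuousOn_const.mul hlog)).add
      Real.continuous_mul_log.continuousOn).add (by fun_prop)).sub
      (continuousOn_id.mul hlog))
  · rw [interior_Ici]
    intro a ha b hb hab
    have ha : (0:ℝ) < a := ha
    have hb : (0:ℝ) < b := hb
    rw [(Gjs_hasDerivAt hpr ha).deriv, (Gjs_hasDerivAt hpr hb).deriv]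
    have h1 : Real.log a + Real.log (pr + b) < Real.log b + Real.log (pr + a) := by
      rw [← Real.log_mul ha.ne' (by positivity), ← Real.log_mul hb.ne' (by positivity)]
      apply Real.log_lt_log (by positivity)
      nlinarith
    linarith

lemma Fjs_key {pr a b : ℝ} (hpr : 0 < pr) (ha : 0 ≤ a) (hb : 0 ≤ b) :
    Fjs pr ((a + b) / 2) ≤ (Fjs pr a + Fjs pr b) / 2 ∧
      (Fjs pr ((a + b) / 2) = (Fjs pr a + Fjs pr b) / 2 → a = b) := by
  have hmid : (0:ℝ) ≤ (a + b) / 2 := by linarith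
  rw [Fjs_eq_Gjs hpr ha, Fjs_eq_Gjs hpr hb, Fjs_eq_Gjs hpr hmid]
  constructor
  · have := (Gjs_strictConvexOn hpr).convexOn.2 (Set.mem_Ici.mpr ha) (Set.mem_Ici.mpr hb)
      (by norm_num : (0:ℝ) ≤ 1/2) (by norm_num : (0:ℝ) ≤ 1/2) (by norm_num)
    simp only [smul_eq_mul] at this
    have e : (1:ℝ)/2 * a + 1/2 * b = (a + b)/2 := by ring
    rw [e] at this
    linarith
  · intro heq
    by_contra hab
    have := (Gjs_strictConvexOn hpr).2 (Set.mem_Ici.mpr ha) (Set.mem_Ici.mpr hb) hab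
      (by norm_num : (0:ℝ) < 1/2) (by norm_num : (0:ℝ) < 1/2) (by norm_num)
    simp only [smul_eq_mul] at this
    have e : (1:ℝ)/2 * a + 1/2 * b = (a + b)/2 := by ring
    rw [e] at this
    linarith
lemma bound_A {m M pr q : ℝ} (hm : 0 < m) (hpr : pr ∈ Set.Icc m M) (hq : q ∈ Set.Icc 0 M) :
    |pr * Real.log (2 * pr / (pr + q))| ≤ M * (Real.log (M / m) + Real.log 2) := by
  obtain ⟨h1, h2⟩ := hpr; obtain ⟨h3, h4⟩ := hq
  have hpr0 : 0 < pr := hm.trans_le h1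
  have hM : 0 < M := hpr0.trans_le h2
  have hpq : 0 < pr + q := by linarith
  have ht0 : 0 < 2 * pr / (pr + q) := by positivity
  have hlog2 : 0 ≤ Real.log 2 := Real.log_nonneg (by norm_num)
  have hlogMm : 0 ≤ Real.log (M / m) := Real.log_nonneg ((one_le_div hm).mpr (h1.trans h2))
  have hub : Real.log (2 * pr / (pr + q)) ≤ Real.log 2 := by
    apply Real.log_le_log ht0
    rw [div_le_iff₀ hpq]; nlinarith
  have hlb : Real.log (m / M) ≤ Real.log (2 * pr / (pr + q)) := by
    apply Real.log_le_log (by positivity)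
    rw [div_le_div_iff₀ hM hpq]; nlinarith
  rw [show m / M = (M / m)⁻¹ by rw [inv_div], Real.log_inv] at hlb
  rw [abs_mul, abs_of_pos hpr0]
  have habs : |Real.log (2 * pr / (pr + q))| ≤ Real.log (M / m) + Real.log 2 :=
    abs_le.mpr ⟨by linarith, by linarith⟩
  exact mul_le_mul h2 habs (abs_nonneg _) hM.le

lemma bound_B {m M pr q : ℝ} (hm : 0 < m) (hpr : pr ∈ Set.Icc m M) (hq : q ∈ Set.Icc 0 M) :
    |q * Real.log (2 * q / (pr + q))| ≤ M * Real.log 2 + M / 2 := by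
  obtain ⟨h1, h2⟩ := hpr; obtain ⟨h3, h4⟩ := hq
  have hpr0 : 0 < pr := hm.trans_le h1
  have hM : 0 < M := hpr0.trans_le h2
  have hpq : 0 < pr + q := by linarith
  have hlog2 : 0 ≤ Real.log 2 := Real.log_nonneg (by norm_num)
  rcases h3.eq_or_lt with h | h
  · rw [← h]; simp; positivity
  · have ht0 : 0 < 2 * q / (pr + q) := by positivity
    have hub : q * Real.log (2 * q / (pr + q)) ≤ M * Real.log 2 := by
      have h5 : Real.log (2 * q / (pr + q)) ≤ Real.log 2 := by
        apply Real.log_le_log ht0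
        rw [div_le_iff₀ hpq]; nlinarith
      calc q * Real.log (2 * q / (pr + q)) ≤ q * Real.log 2 :=
            mul_le_mul_of_nonneg_left h5 h3
        _ ≤ M * Real.log 2 := mul_le_mul_of_nonneg_right h4 hlog2
    have hlb : -(M / 2) ≤ q * Real.log (2 * q / (pr + q)) := by
      have h5 : Real.log ((pr + q) / (2 * q)) ≤ (pr + q) / (2 * q) - 1 :=
        Real.log_le_sub_one_of_pos (by positivity)
      have h6 : Real.log (2 * q / (pr + q)) = -Real.log ((pr + q) / (2 * q)) := by
        rw [show (2 : ℝ) * q / (pr + q) = ((pr + q) / (2 * q))⁻¹ by rw [inv_div],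
          Real.log_inv]
      have h7 : 1 - (pr + q) / (2 * q) ≤ Real.log (2 * q / (pr + q)) := by
        rw [h6]; linarith
      have h8 : q * (1 - (pr + q) / (2 * q)) ≤ q * Real.log (2 * q / (pr + q)) :=
        mul_le_mul_of_nonneg_left h7 h3
      have h9 : q * (1 - (pr + q) / (2 * q)) = (q - pr) / 2 := by
        field_simp; ring
      nlinarith
    rw [abs_le]
    constructor <;> nlinarith

/-- Existence and uniqueness of the ideal parameter `θ*` (Theorem 2): if the family
`{p_θ}` is identifiable, convex, and compact for the Jensen-Shannon metric (compactness of
`Θ` together with continuity of `θ ↦ D_JS(p*‖p_θ)`), with `m ≤ p* ≤ M` and `p_θ ≤ M`,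
then there is a unique `θ*` minimizing `θ ↦ D_JS(p*‖p_θ)`. -/
theorem stmt9 {E : Type*} [MeasurableSpace E] (μ : Measure E) [IsFiniteMeasure μ]
    {Θ : Type*} [TopologicalSpace Θ] [CompactSpace Θ] [Nonempty Θ]
    (m M : ℝ) (hm : 0 < m) (hmM : m ≤ M)
    (pstar : E → ℝ) (p : Θ → E → ℝ)
    (hpsm : Measurable pstar) (hpm : ∀ θ, Measurable (p θ))
    (hps : ∀ x, pstar x ∈ Set.Icc m M)
    (hpb : ∀ θ x, p θ x ∈ Set.Icc (0 : ℝ) M)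
    (hps1 : ∫ x, pstar x ∂μ = 1) (hp1 : ∀ θ, ∫ x, p θ x ∂μ = 1)
    -- identifiability
    (hident : ∀ θ₁ θ₂, p θ₁ =ᵐ[μ] p θ₂ → θ₁ = θ₂)
    -- convexity of the model
    (hconv : ∀ θ₁ θ₂, ∀ l ∈ Set.Icc (0 : ℝ) 1,
      ∃ θ, p θ =ᵐ[μ] fun x => l * p θ₁ x + (1 - l) * p θ₂ x)
    -- compactness for the Jensen-Shannon metric δ: continuity of the JS criterion
    (hcont : Continuous fun θ => JSdiv μ pstar (p θ)) :
    ∃! θstar : Θ, ∀ θ, JSdiv μ pstar (p θstar) ≤ JSdiv μ pstar (p θ) := by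
  have hps0 : ∀ x, 0 < pstar x := fun x => hm.trans_le (hps x).1
  -- existence
  obtain ⟨θ₀, -, hθ₀⟩ := isCompact_univ.exists_isMinOn Set.univ_nonempty hcont.continuousOn
  have h₀ : ∀ θ, JSdiv μ pstar (p θ₀) ≤ JSdiv μ pstar (p θ) := fun θ =>
    hθ₀ (Set.mem_univ θ)
  refine ⟨θ₀, h₀, fun θ₁ h₁ => ?_⟩
  -- integrability
  have hA : ∀ θ, Integrable
      (fun x => pstar x * Real.log (2 * pstar x / (pstar x + p θ x))) μ := by
    intro θ
    have hmeas : Measurable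
        (fun x => pstar x * Real.log (2 * pstar x / (pstar x + p θ x))) :=
      hpsm.mul (((measurable_const.mul hpsm).div (hpsm.add (hpm θ))).log)
    exact (integrable_const (M * (Real.log (M / m) + Real.log 2))).mono'
      hmeas.aestronglyMeasurable (ae_of_all _ fun x => bound_A hm (hps x) (hpb θ x))
  have hB : ∀ θ, Integrable
      (fun x => p θ x * Real.log (2 * p θ x / (pstar x + p θ x))) μ := by
    intro θ
    have hmeas : Measurable
        (fun x => p θ x * Real.log (2 * p θ x / (pstar x + p θ x))) :=
      (hpm θ).mul (((measurable_const.mul (hpm θ)).div (hpsm.add (hpm θ))).log)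
    exact (integrable_const (M * Real.log 2 + M / 2)).mono'
      hmeas.aestronglyMeasurable (ae_of_all _ fun x => bound_B hm (hps x) (hpb θ x))
  have hΦ : ∀ θ, Integrable (fun x => Fjs (pstar x) (p θ x)) μ := fun θ => by
    exact (hA θ).add (hB θ)
  have hJ : ∀ θ, JSdiv μ pstar (p θ) = (1 / 2) * ∫ x, Fjs (pstar x) (p θ x) ∂μ := by
    intro θ
    unfold JSdiv
    rw [show (fun x => Fjs (pstar x) (p θ x)) = fun x =>
      pstar x * Real.log (2 * pstar x / (pstar x + p θ x)) +
        p θ x * Real.log (2 * p θ x / (pstar x + p θ x)) from rfl,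
      integral_add (hA θ) (hB θ)]
    ring
  -- both are minimizers with equal value
  have heq : JSdiv μ pstar (p θ₁) = JSdiv μ pstar (p θ₀) := le_antisymm (h₁ θ₀) (h₀ θ₁)
  obtain ⟨θmid, hmid⟩ := hconv θ₁ θ₀ (1 / 2) (by norm_num)
  have hmid' : (fun x => Fjs (pstar x) (p θmid x)) =ᵐ[μ]
      fun x => Fjs (pstar x) ((p θ₁ x + p θ₀ x) / 2) := by
    filter_upwards [hmid] with x hx
    rw [hx]; congr 1; ring
  set D : E → ℝ := fun x => (Fjs (pstar x) (p θ₁ x) + Fjs (pstar x) (p θ₀ x)) / 2 -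
    Fjs (pstar x) ((p θ₁ x + p θ₀ x) / 2) with hDdef
  have hD0 : ∀ x, 0 ≤ D x := by
    intro x
    have := (Fjs_key (hps0 x) (hpb θ₁ x).1 (hpb θ₀ x).1).1
    simp only [hDdef]; linarith
  have hDint : Integrable D μ :=
    (((hΦ θ₁).add (hΦ θ₀)).div_const 2).sub ((hΦ θmid).congr hmid')
  have hint_mid : ∫ x, Fjs (pstar x) ((p θ₁ x + p θ₀ x) / 2) ∂μ =
      2 * JSdiv μ pstar (p θmid) := by
    rw [← integral_congr_ae hmid', hJ θmid]; ring
  have hDval : ∫ x, D x ∂μ = JSdiv μ pstar (p θ₁) + JSdiv μ pstar (p θ₀) -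
      2 * JSdiv μ pstar (p θmid) := by
    simp only [hDdef]
    have hsum : Integrable
        (fun x => (Fjs (pstar x) (p θ₁ x) + Fjs (pstar x) (p θ₀ x)) / 2) μ :=
      ((hΦ θ₁).add (hΦ θ₀)).div_const 2
    rw [integral_sub hsum ((hΦ θmid).congr hmid')]
    rw [integral_div, integral_add (hΦ θ₁) (hΦ θ₀), hint_mid, hJ θ₁, hJ θ₀]
    ring
  have hDle : ∫ x, D x ∂μ ≤ 0 := by
    have := h₀ θmid
    rw [hDval]; linarith
  have hDz : ∫ x, D x ∂μ = 0 := le_antisymm hDle (integral_nonneg hD0)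
  have hae : D =ᵐ[μ] 0 := (integral_eq_zero_iff_of_nonneg hD0 hDint).mp hDz
  apply hident θ₁ θ₀
  filter_upwards [hae] with x hx
  refine (Fjs_key (hps0 x) (hpb θ₁ x).1 (hpb θ₀ x).1).2 ?_
  simp only [hDdef, Pi.zero_apply] at hx
  linarith
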